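/- (Ordinal comparison is ordinal computable.) There exist a program P and pairwise distinct natural numbers n₁, n₂, n₃, none of which belongs to states(P), such that for all ordinals α and β the following holds. Code the pair (α,β) on two interleaved tracks of a single tape: let T₀ : Ordinal → {0,1} be given by T₀(2·ξ) = 1 iff ξ = α and T₀(2·ξ + 1) = 1 iff ξ = β (here 2·ξ denotes the ordinal product, ξ copies of 2, so every ordinal is uniquely of the form 2·ξ + i with i < 2). Then the ordinal computation by P with input T₀ halts with length θ = γ+1, and the final state satisfies: S(γ) = n₁ if α > β, S(γ) = n₂ if α = β, and S(γ) = n₃ if α < β. -/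

import Mathlib

attribute [local instance] Classical.propDecidable

namespace OTM

universe u

/-- A command is a 5-tuple `(s, c, c', m, s')` with `s, s' ∈ ℕ` and
`c, c', m ∈ {0,1}` (encoded as `Bool`, with `0 = false`, `1 = true`). -/
abbrev Command : Type := ℕ × Bool × Bool × Bool × ℕ

/-- A program is a finite set of commands reacting to both possible read
symbols in every occurring state, and doing so deterministically. -/
structure Program where
  cmds : Finset Command
  total : ∀ C ∈ cmds, ∃ D ∈ cmds, D.1 = C.1 ∧ D.2.1 ≠ C.2.1
  deterministic : ∀ C ∈ cmds, ∀ D ∈ cmds, C.1 = D.1 → C.2.1 = D.2.1 → C = D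

/-- The set of program states. -/
def Program.states (P : Program) : Set ℕ := {s | ∃ C ∈ P.cmds, C.1 = s}

/-- `t` is in the domain of a computation of length `len`, where `len = none`
codes length `Ord` (the computation never stops) and `len = some θ` codes
length `θ`. -/
def inDom (len : Option Ordinal.{u}) (t : Ordinal.{u}) : Prop := ∀ θ ∈ len, t < θ

/-- The inferior limit of a `ℕ`-valued function along the ordinals approaching
`t`: the least value attained cofinally often below `t`. -/
noncomputable def natLiminf (t : Ordinal.{u}) (f : Ordinal.{u} → ℕ) : ℕ :=
  sInf {n | ∀ s < t, ∃ r, s ≤ r ∧ r < t ∧ f r = n}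

/-- The inferior limit of an ordinal-valued function `f` restricted to the
index set `A`, along the ordinals approaching `t`: the supremum over (nonempty)
tails of the infima of `f` on the tails. -/
noncomputable def ordLiminf (t : Ordinal.{u}) (A : Set Ordinal.{u}) (f : Ordinal.{u} → Ordinal.{u}) : Ordinal.{u} :=
  sSup {β | ∃ s, s < t ∧ (∃ r, r ∈ A ∧ s ≤ r ∧ r < t) ∧
      ∀ r, r ∈ A → s ≤ r → r < t → β ≤ f r}

/-- `(len, S, H, T)` is an ordinal computation by the program `P`:
`S` is the sequence of machine states, `H` the sequence of head positions and
`T` the sequence of tape contents (only their values at ordinals in the domain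
given by `len` are relevant). -/
structure IsComputation (P : Program) (len : Option Ordinal.{u})
    (S : Ordinal.{u} → ℕ) (H : Ordinal.{u} → Ordinal.{u}) (T : Ordinal.{u} → Ordinal.{u} → Bool) : Prop where
  /-- the length, if an ordinal, is a successor ordinal -/
  len_succ : ∀ θ ∈ len, ∃ β : Ordinal.{u}, θ = β + 1
  /-- the machine starts in state `0` -/
  init_S : S 0 = 0
  /-- the machine starts with head position `0` -/
  init_H : H 0 = 0
  /-- the machine stops if the machine state is not a program state -/
  halt : ∀ t, inDom len t → S t ∉ P.states → len = some (t + 1)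
  /-- execution of the unique applicable command -/
  step : ∀ t, inDom len t → S t ∈ P.states → inDom len (t + 1) ∧
      ∀ C ∈ P.cmds, C.1 = S t → C.2.1 = T t (H t) →
        (∀ ξ, T (t + 1) ξ = if ξ = H t then C.2.2.1 else T t ξ) ∧
        S (t + 1) = C.2.2.2.2 ∧
        H (t + 1) = (if C.2.2.2.1 = true then H t + 1
            else if ∃ γ, H t = γ + 1 then Ordinal.pred (H t) else 0)
  /-- at limit times the constellation is determined by inferior limits -/
  limit : ∀ t, inDom len t → Order.IsSuccLimit t →
      (∀ ξ, (T t ξ = true ↔ ∃ s < t, ∀ r, s ≤ r → r < t → T r ξ = true)) ∧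
      S t = natLiminf t S ∧
      H t = ordLiminf t {s | S s = S t} H

/-- `P : T₀ ↦ T₁` : the ordinal computation by `P` with input `T₀` stops with
final tape content `T₁`. -/
def Computes (P : Program) (T₀ T₁ : Ordinal.{u} → Bool) : Prop :=
  ∃ (β : Ordinal.{u}) (S : Ordinal.{u} → ℕ) (H : Ordinal.{u} → Ordinal.{u}) (T : Ordinal.{u} → Ordinal.{u} → Bool),
    IsComputation P (some (β + 1)) S H T ∧ T 0 = T₀ ∧ T β = T₁

/-- The characteristic function of a set of ordinals. -/
noncomputable def chi (z : Set Ordinal.{u}) : Ordinal.{u} → Bool :=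
  fun ξ => if ξ ∈ z then true else false

/-- `x` is ordinal computable from a finite set of ordinal parameters. -/
def ComputableFromFinitelyManyParams (x : Set Ordinal.{u}) : Prop :=
  ∃ (z : Finset Ordinal.{u}) (P : Program), Computes P (chi ↑z) (chi x)

end OTM
universe u
open Ordinal
open Ordinal
namespace OTMProof
lemma two_ne : (2 : Ordinal.{u}) ≠ 0 := by norm_num

lemma mod_two_eq (t : Ordinal.{u}) : t % 2 = 0 ∨ t % 2 = 1 := by
  have h := Ordinal.mod_lt t (two_ne)
  have : t % 2 ≤ 1 := by
    have h2 : t % 2 < Order.succ (1 : Ordinal.{u}) := by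
      rwa [← Ordinal.add_one_eq_succ, one_add_one_eq_two]
    exact Order.lt_succ_iff.1 h2
  rcases Ordinal.le_one_iff.1 this with h | h
  · exact Or.inl h
  · exact Or.inr h

lemma even_mod (q : Ordinal.{u}) : (2 * q) % 2 = 0 := by
  simpa using Ordinal.mul_add_mod_self 2 q 0

lemma odd_mod (q : Ordinal.{u}) : (2 * q + 1) % 2 = 1 := by
  rw [Ordinal.mul_add_mod_self]
  exact Ordinal.mod_eq_of_lt (by norm_num)

lemma decomp (t : Ordinal.{u}) : 2 * (t / 2) + t % 2 = t := Ordinal.div_add_mod t 2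

lemma succ_mod (t : Ordinal.{u}) : (t + 1) % 2 = if t % 2 = 1 then 0 else 1 := by
  rcases mod_two_eq t with h | h
  · have := decomp t
    rw [h, add_zero] at this
    rw [h]
    simp only [if_neg (by norm_num : (0:Ordinal.{u}) ≠ 1)]
    rw [← this]
    exact odd_mod _
  · have := decomp t
    rw [h] at this
    rw [h, if_pos rfl, ← this, add_assoc]
    have : (1 : Ordinal.{u}) + 1 = 2 * 1 := by norm_num
    rw [this, ← mul_add]
    exact even_mod _

lemma limit_mod {t : Ordinal.{u}} (h : Order.IsSuccLimit t) : t % 2 = 0 := by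
  rcases mod_two_eq t with h0 | h1
  · exact h0
  · exfalso
    have hd := decomp t
    rw [h1] at hd
    have hlt : 2 * (t / 2) < t := by
      conv_rhs => rw [← hd]
      exact lt_add_one _
    have := h.succ_lt hlt
    rw [Ordinal.add_one_eq_succ] at hd; rw [hd] at this
    exact lt_irrefl _ this

lemma even_ne_odd (q r : Ordinal.{u}) : 2 * q ≠ 2 * r + 1 := by
  intro h
  have := even_mod q
  rw [h, odd_mod] at this
  norm_num at this

lemma two_mul_inj {q r : Ordinal.{u}} (h : 2 * q = 2 * r) : q = r := by
  have h1 : 2 * q / 2 = 2 * r / 2 := by rw [h]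
  rwa [Ordinal.mul_div_cancel _ two_ne, Ordinal.mul_div_cancel _ two_ne] at h1

lemma two_mul_le {q r : Ordinal.{u}} (h : q ≤ r) : 2 * q ≤ 2 * r :=
  mul_le_mul_right h 2

lemma two_mul_succ_le {q r : Ordinal.{u}} (h : q < r) : 2 * q + 2 ≤ 2 * r := by
  have : 2 * (q + 1) ≤ 2 * r := two_mul_le (Order.add_one_le_of_lt h)
  rwa [mul_add, mul_one] at this

end OTMProof

namespace OTMProof
open OTM

def P : Program where
  cmds := {(0,false,false,true,1),(0,true,true,true,2),(1,false,false,true,0),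
           (1,true,true,true,6),(2,false,false,true,5),(2,true,true,true,4),
           (6,false,false,true,3),(6,true,true,true,3)}
  total := by decide
  deterministic := by decide

lemma mem_states (s : ℕ) : s ∈ P.states ↔ s = 0 ∨ s = 1 ∨ s = 2 ∨ s = 6 := by
  simp [Program.states, P]
  tauto

noncomputable def Srun (μ : Ordinal.{u}) (a b : ℕ) (t : Ordinal.{u}) : ℕ :=
  if t = μ + 1 then a else if t = μ + 2 then b else if t % 2 = 1 then 1 else 0

lemma inDom_some {x t : Ordinal.{u}} : OTM.inDom (some x) t ↔ t < x := by
  simp [OTM.inDom]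

end OTMProof

namespace OTMProof
open OTM

lemma lt_add_one_iff' {t x : Ordinal.{u}} : t < x + 1 ↔ t ≤ x := by
  rw [Ordinal.add_one_eq_succ, Order.lt_succ_iff]

lemma succ_inj' {t s : Ordinal.{u}} (h : t + 1 = s + 1) : t = s := by
  apply le_antisymm
  · exact lt_add_one_iff'.1 (h ▸ lt_add_one t)
  · exact lt_add_one_iff'.1 (h.symm ▸ lt_add_one s)

lemma mu1_lt_mu2 {μ : Ordinal.{u}} : μ + 1 < μ + 2 := by
  rw [show μ + 2 = (μ + 1) + 1 by rw [add_assoc]; norm_num]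
  exact lt_add_one _

lemma Srun_lt {μ : Ordinal.{u}} {a b : ℕ} {t : Ordinal.{u}} (h : t < μ + 1) :
    Srun μ a b t = if t % 2 = 1 then 1 else 0 := by
  rw [Srun, if_neg (ne_of_lt h), if_neg (ne_of_lt (lt_trans h mu1_lt_mu2))]

lemma mu2_ne_mu1 {μ : Ordinal.{u}} : μ + 2 ≠ μ + 1 := ne_of_gt mu1_lt_mu2

lemma Srun_at_a {μ : Ordinal.{u}} {a b : ℕ} : Srun μ a b (μ + 1) = a := by
  rw [Srun, if_pos rfl]

lemma Srun_at_b {μ : Ordinal.{u}} {a b : ℕ} : Srun μ a b (μ + 2) = b := by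
  rw [Srun, if_neg mu2_ne_mu1, if_pos rfl]

lemma tri {μ t : Ordinal.{u}} (h : t ≤ μ + 2) : t < μ + 1 ∨ t = μ + 1 ∨ t = μ + 2 := by
  rcases eq_or_lt_of_le h with h | h
  · exact Or.inr (Or.inr h)
  · rw [show μ + 2 = (μ + 1) + 1 by rw [add_assoc]; norm_num, lt_add_one_iff'] at h
    rcases eq_or_lt_of_le h with h | h
    · exact Or.inr (Or.inl h)
    · exact Or.inl h

end OTMProof

namespace OTMProof
open OTM

lemma mem_cmds {C : Command} : C ∈ P.cmds ↔
    C = (0,false,false,true,1) ∨ C = (0,true,true,true,2) ∨ C = (1,false,false,true,0) ∨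
    C = (1,true,true,true,6) ∨ C = (2,false,false,true,5) ∨ C = (2,true,true,true,4) ∨
    C = (6,false,false,true,3) ∨ C = (6,true,true,true,3) := by
  simp [P]

lemma tape_ok {T₀ : Ordinal.{u} → Bool} {t : Ordinal.{u}} {c : Bool} (h : T₀ t = c) :
    ∀ ξ : Ordinal.{u}, T₀ ξ = if ξ = t then c else T₀ ξ := by
  intro ξ
  by_cases hξ : ξ = t
  · subst hξ; simp [h]
  · simp [hξ]

lemma master (T₀ : Ordinal.{u} → Bool) (μ : Ordinal.{u}) (a b : ℕ)
    (h0 : ∀ t < μ, T₀ t = false) (hμ : T₀ μ = true)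
    (hcase : (μ % 2 = 0 ∧ a = 2 ∧ b = (if T₀ (μ+1) = true then 4 else 5))
           ∨ (μ % 2 = 1 ∧ a = 6 ∧ b = 3)) :
    IsComputation P (some (μ + 2 + 1)) (Srun μ a b) (fun t => t) (fun _ => T₀) := by
  have hμ2 : μ + 1 + 1 = μ + 2 := by rw [add_assoc]; norm_num
  have ha : a = 2 ∨ a = 6 := by rcases hcase with ⟨_, h, _⟩ | ⟨_, h, _⟩ <;> simp [h]
  have hb : b = 3 ∨ b = 4 ∨ b = 5 := by
    rcases hcase with ⟨_, _, h⟩ | ⟨_, _, h⟩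
    · rcases ite_eq_or_eq (T₀ (μ+1) = true) 4 5 with h' | h' <;> omega
    · omega
  have hdom : ∀ t : Ordinal.{u}, inDom (some (μ + 2 + 1)) t ↔ t ≤ μ + 2 := by
    intro t; rw [inDom_some, lt_add_one_iff']
  constructor
  · rintro θ hθ
    rw [Option.mem_def, Option.some_inj] at hθ
    exact ⟨μ + 2, hθ.symm⟩
  · -- init_S
    have h1 : (0 : Ordinal.{u}) < μ + 1 := lt_add_one_iff'.2 (zero_le (a := μ))
    rw [Srun_lt h1, Ordinal.zero_mod]
    norm_num
  · rfl
  · -- halt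
    intro t ht hnot
    rcases tri ((hdom t).1 ht) with h | h | h
    · exfalso
      apply hnot
      rw [Srun_lt h, mem_states]
      rcases mod_two_eq t with h' | h' <;> simp [h']
    · exfalso
      apply hnot
      rw [h, Srun_at_a, mem_states]
      rcases ha with h' | h' <;> simp [h']
    · rw [h]
  · -- step
    intro t ht hs
    have htle : t < μ + 1 ∨ t = μ + 1 := by
      rcases tri ((hdom t).1 ht) with h | h | h
      · exact Or.inl h
      · exact Or.inr h
      · exfalso
        rw [h, Srun_at_b, mem_states] at hs
        omega
    constructor
    · rw [hdom]
      rcases htle with h | h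
      · exact le_trans (add_le_add_left (lt_add_one_iff'.1 h) 1) (le_of_lt mu1_lt_mu2)
      · rw [h]; rw [add_assoc]; norm_num
    · intro C hC hstate hread
      have hread' : C.2.1 = T₀ t := hread
      have hstate' : C.1 = Srun μ a b t := hstate
      rcases htle with h | h
      · rcases eq_or_lt_of_le (lt_add_one_iff'.1 h) with he | hlt
        · -- t = μ
          subst he
          rcases hcase with ⟨hp, ha2, _⟩ | ⟨hp, ha6, _⟩
          · have Sval : Srun t a b t = 0 := by rw [Srun_lt h, hp]; norm_num
            have Snext : Srun t a b (t+1) = 2 := by rw [Srun_at_a, ha2]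
            rcases mem_cmds.1 hC with rfl|rfl|rfl|rfl|rfl|rfl|rfl|rfl <;>
              first
                | (rw [Sval] at hstate'; exact absurd hstate' (by decide))
                | (rw [hμ] at hread'; exact absurd hread' (by decide))
                | exact ⟨tape_ok hμ, Snext, by simp⟩
          · have Sval : Srun t a b t = 1 := by rw [Srun_lt h, hp]; norm_num
            have Snext : Srun t a b (t+1) = 6 := by rw [Srun_at_a, ha6]
            rcases mem_cmds.1 hC with rfl|rfl|rfl|rfl|rfl|rfl|rfl|rfl <;>
              first
                | (rw [Sval] at hstate'; exact absurd hstate' (by decide))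
                | (rw [hμ] at hread'; exact absurd hread' (by decide))
                | exact ⟨tape_ok hμ, Snext, by simp⟩
        · -- t < μ
          have Rval : T₀ t = false := h0 t hlt
          have h1 : t + 1 < μ + 1 := lt_add_one_iff'.2 (Order.add_one_le_of_lt hlt)
          rcases mod_two_eq t with hp | hp
          · have Sval : Srun μ a b t = 0 := by rw [Srun_lt h, hp]; norm_num
            have Snext : Srun μ a b (t+1) = 1 := by
              rw [Srun_lt h1, succ_mod, hp]; norm_num
            rcases mem_cmds.1 hC with rfl|rfl|rfl|rfl|rfl|rfl|rfl|rfl <;>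
              first
                | (rw [Sval] at hstate'; exact absurd hstate' (by decide))
                | (rw [Rval] at hread'; exact absurd hread' (by decide))
                | exact ⟨tape_ok Rval, Snext, by simp⟩
          · have Sval : Srun μ a b t = 1 := by rw [Srun_lt h, hp]; norm_num
            have Snext : Srun μ a b (t+1) = 0 := by
              rw [Srun_lt h1, succ_mod, hp]; norm_num
            rcases mem_cmds.1 hC with rfl|rfl|rfl|rfl|rfl|rfl|rfl|rfl <;>
              first
                | (rw [Sval] at hstate'; exact absurd hstate' (by decide))
                | (rw [Rval] at hread'; exact absurd hread' (by decide))
                | exact ⟨tape_ok Rval, Snext, by simp⟩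
      · -- t = μ + 1
        subst h
        have Sval : Srun μ a b (μ+1) = a := Srun_at_a
        rcases hcase with ⟨hp, ha2, hb'⟩ | ⟨hp, ha6, hb'⟩
        · subst ha2
          cases hT : T₀ (μ+1) with
          | true =>
            have Snext : Srun μ 2 b (μ+1+1) = 4 := by
              rw [hμ2, Srun_at_b, hb', hT]; norm_num
            rcases mem_cmds.1 hC with rfl|rfl|rfl|rfl|rfl|rfl|rfl|rfl <;>
              first
                | (rw [Sval] at hstate'; exact absurd hstate' (by decide))
                | (rw [hT] at hread'; exact absurd hread' (by decide))
                | exact ⟨tape_ok hT, Snext, by simp⟩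
          | false =>
            have Snext : Srun μ 2 b (μ+1+1) = 5 := by
              rw [hμ2, Srun_at_b, hb', hT]; norm_num
            rcases mem_cmds.1 hC with rfl|rfl|rfl|rfl|rfl|rfl|rfl|rfl <;>
              first
                | (rw [Sval] at hstate'; exact absurd hstate' (by decide))
                | (rw [hT] at hread'; exact absurd hread' (by decide))
                | exact ⟨tape_ok hT, Snext, by simp⟩
        · subst ha6
          have Snext : Srun μ 6 b (μ+1+1) = 3 := by rw [hμ2, Srun_at_b, hb']
          cases hT : T₀ (μ+1) with
          | true =>
            rcases mem_cmds.1 hC with rfl|rfl|rfl|rfl|rfl|rfl|rfl|rfl <;>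
              first
                | (rw [Sval] at hstate'; exact absurd hstate' (by decide))
                | (rw [hT] at hread'; exact absurd hread' (by decide))
                | exact ⟨tape_ok hT, Snext, by simp⟩
          | false =>
            rcases mem_cmds.1 hC with rfl|rfl|rfl|rfl|rfl|rfl|rfl|rfl <;>
              first
                | (rw [Sval] at hstate'; exact absurd hstate' (by decide))
                | (rw [hT] at hread'; exact absurd hread' (by decide))
                | exact ⟨tape_ok hT, Snext, by simp⟩
  · -- limit
    intro t ht hlim
    have hns : ∀ x : Ordinal.{u}, t ≠ x + 1 := by
      intro x he
      have hx : x < t := he ▸ lt_add_one x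
      have h2 := hlim.succ_lt hx
      rw [he, Ordinal.add_one_eq_succ] at h2
      exact lt_irrefl _ h2
    have htμ : t ≤ μ := by
      rcases tri ((hdom t).1 ht) with h | h | h
      · exact lt_add_one_iff'.1 h
      · exact absurd h (hns μ)
      · exfalso; rw [← hμ2] at h; exact hns (μ+1) h
    have hp : t % 2 = 0 := limit_mod hlim
    have htμ1 : t < μ + 1 := lt_of_le_of_lt htμ (lt_add_one μ)
    have St : Srun μ a b t = 0 := by rw [Srun_lt htμ1, hp]; norm_num
    have hcof : ∀ s, s < t → ∃ r, s ≤ r ∧ r < t ∧ Srun μ a b r = 0 := by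
      intro s hs
      have hsμ1 : ∀ r, r < t → Srun μ a b r = if r % 2 = 1 then 1 else 0 := by
        intro r hr
        exact Srun_lt (lt_trans hr htμ1)
      rcases mod_two_eq s with hs2 | hs2
      · exact ⟨s, le_rfl, hs, by rw [hsμ1 s hs, hs2]; norm_num⟩
      · have hst : s + 1 < t := by
          have h2 := hlim.succ_lt hs
          rwa [← Ordinal.add_one_eq_succ] at h2
        refine ⟨s + 1, le_of_lt (lt_add_one s), hst, ?_⟩
        rw [hsμ1 _ hst, succ_mod, hs2]
        norm_num
    refine ⟨?_, ?_, ?_⟩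
    · intro ξ
      constructor
      · intro h
        exact ⟨0, hlim.pos, fun _ _ _ => h⟩
      · rintro ⟨s, hs, hf⟩
        exact hf s le_rfl hs
    · rw [St, natLiminf]
      symm
      have hmem : 0 ∈ {n | ∀ s < t, ∃ r, s ≤ r ∧ r < t ∧ Srun μ a b r = n} := by
        intro s hs
        exact hcof s hs
      exact Nat.eq_zero_of_le_zero (Nat.sInf_le hmem)
    · rw [ordLiminf]
      set B := {β | ∃ s, s < t ∧ (∃ r, r ∈ {s | Srun μ a b s = Srun μ a b t} ∧ s ≤ r ∧ r < t) ∧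
          ∀ r, r ∈ {s | Srun μ a b s = Srun μ a b t} → s ≤ r → r < t → β ≤ (fun t => t) r} with hB
      have sub1 : ∀ s, s < t → s ∈ B := by
        intro s hs
        rcases hcof s hs with ⟨r, hsr, hrt, hr0⟩
        refine ⟨s, hs, ⟨r, ?_, hsr, hrt⟩, ?_⟩
        · simp only [Set.mem_setOf_eq, St, hr0]
        · intro r _ hsr' _
          exact hsr'
      have sub2 : ∀ β ∈ B, β < t := by
        rintro β ⟨s, hs, ⟨r, hrA, hsr, hrt⟩, hall⟩
        exact lt_of_le_of_lt (hall r hrA hsr hrt) hrt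
      have bdd : BddAbove B := ⟨t, fun β hβ => le_of_lt (sub2 β hβ)⟩
      have hne : B.Nonempty := ⟨0, sub1 0 hlim.pos⟩
      have le1 : sSup B ≤ t := csSup_le hne (fun β hβ => le_of_lt (sub2 β hβ))
      have ge1 : t ≤ sSup B := by
        by_contra hcon
        push_neg at hcon
        have h2 := hlim.succ_lt hcon
        rw [← Ordinal.add_one_eq_succ] at h2
        have h3 : sSup B + 1 ∈ B := sub1 _ h2
        have h4 := le_csSup bdd h3
        exact absurd h4 (not_le.2 (lt_add_one _))
      exact le_antisymm ge1 le1

end OTMProof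

namespace OTMProof
open OTM

lemma chi_pair (x y t : Ordinal.{u}) :
    chi {x, y} t = true ↔ t = x ∨ t = y := by
  simp [chi]

lemma two_mul_lt {q r : Ordinal.{u}} (h : q < r) : 2 * q + 1 < 2 * r :=
  lt_of_lt_of_le (add_lt_add_right (by norm_num) _) (two_mul_succ_le h)

end OTMProof

open OTM in
/-- Ordinal comparison is ordinal computable: there are a program `P` and
pairwise distinct naturals `n₁, n₂, n₃` outside `states(P)` such that on the
input tape coding `(α, β)` on two interleaved tracks (a `1` at `2·α` on track
`0`, a `1` at `2·β + 1` on track `1`, and `0` everywhere else), the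
computation by `P` halts, with final state `n₁` if `α > β`, `n₂` if `α = β`,
and `n₃` if `α < β`. -/
theorem ordinal_comparison_computable :
    ∃ (P : Program) (n₁ n₂ n₃ : ℕ),
      n₁ ≠ n₂ ∧ n₁ ≠ n₃ ∧ n₂ ≠ n₃ ∧
      n₁ ∉ P.states ∧ n₂ ∉ P.states ∧ n₃ ∉ P.states ∧
      ∀ α β : Ordinal.{u},
        ∃ (γ : Ordinal.{u}) (S : Ordinal.{u} → ℕ) (H : Ordinal.{u} → Ordinal.{u})
          (T : Ordinal.{u} → Ordinal.{u} → Bool),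
          IsComputation P (some (γ + 1)) S H T ∧
          T 0 = chi {2 * α, 2 * β + 1} ∧
          (β < α → S γ = n₁) ∧ (α = β → S γ = n₂) ∧ (α < β → S γ = n₃) := by
  refine ⟨OTMProof.P, 3, 4, 5, by norm_num, by norm_num, by norm_num,
    by simp [OTMProof.mem_states], by simp [OTMProof.mem_states],
    by simp [OTMProof.mem_states], ?_⟩
  intro α β
  set T₀ : Ordinal.{u} → Bool := chi {2 * α, 2 * β + 1} with hT₀
  have hTval : ∀ t, T₀ t = true ↔ t = 2 * α ∨ t = 2 * β + 1 := fun t => OTMProof.chi_pair _ _ t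
  have hTfalse : ∀ t, t ≠ 2 * α → t ≠ 2 * β + 1 → T₀ t = false := by
    intro t h1 h2
    rcases Bool.eq_false_or_eq_true (T₀ t) with h | h
    · rcases (hTval t).1 h with h' | h' <;> tauto
    · exact h
  rcases le_or_gt α β with hle | hgt
  · -- α ≤ β : μ = 2α
    set μ : Ordinal.{u} := 2 * α with hμdef
    set b : ℕ := if T₀ (μ + 1) = true then 4 else 5 with hbdef
    have hread : T₀ (μ + 1) = true ↔ α = β := by
      rw [hTval]
      constructor
      · rintro (h | h)
        · exact absurd h.symm (OTMProof.even_ne_odd α α)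
        · exact OTMProof.two_mul_inj (OTMProof.succ_inj' h)
      · rintro rfl
        exact Or.inr rfl
    have h0 : ∀ t < μ, T₀ t = false := by
      intro t ht
      refine hTfalse t (ne_of_lt ht) (ne_of_lt ?_)
      calc t < 2 * α := ht
        _ ≤ 2 * β := OTMProof.two_mul_le hle
        _ < 2 * β + 1 := lt_add_one _
    have hμt : T₀ μ = true := (hTval μ).2 (Or.inl rfl)
    have hcomp := OTMProof.master T₀ μ 2 b h0 hμt
      (Or.inl ⟨OTMProof.even_mod α, rfl, rfl⟩)
    refine ⟨μ + 2, OTMProof.Srun μ 2 b, fun t => t, fun _ => T₀, hcomp, rfl, ?_, ?_, ?_⟩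
    · intro h; exact absurd h (not_lt.2 hle)
    · intro h
      rw [OTMProof.Srun_at_b, hbdef, if_pos (hread.2 h)]
    · intro h
      rw [OTMProof.Srun_at_b, hbdef, if_neg]
      rw [hread]
      exact ne_of_lt h
  · -- β < α : μ = 2β + 1
    set μ : Ordinal.{u} := 2 * β + 1 with hμdef
    have h0 : ∀ t < μ, T₀ t = false := by
      intro t ht
      refine hTfalse t (ne_of_lt ?_) (ne_of_lt ht)
      calc t < 2 * β + 1 := ht
        _ < 2 * α := OTMProof.two_mul_lt hgt
    have hμt : T₀ μ = true := (hTval μ).2 (Or.inr rfl)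
    have hcomp := OTMProof.master T₀ μ 6 3 h0 hμt
      (Or.inr ⟨OTMProof.odd_mod β, rfl, rfl⟩)
    refine ⟨μ + 2, OTMProof.Srun μ 6 3, fun t => t, fun _ => T₀, hcomp, rfl, ?_, ?_, ?_⟩
    · intro _; exact OTMProof.Srun_at_b
    · rintro rfl; exact absurd hgt (lt_irrefl _)
    · intro h; exact absurd (lt_trans h hgt) (lt_irrefl _)
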